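/- Let m ≥ 2 and suppose a real sequence (a_n)_{n≥1} has the property that for every sufficiently large x there exist n, n' ∈ [x − c x^{1−1/m}, x + c x^{1−1/m}] ∩ ℕ with a_n > 0 and a_{n'} < 0 (c > 0 fixed). Then #{n ≤ x : a_n > 0} ≫ x^{1/m} and #{n ≤ x : a_n < 0} ≫ x^{1/m} for all large x. -/

import Mathlib

open Real Set

lemma count_aux (p : ℕ → Prop) [DecidablePred p] (x t c : ℝ)
    (J : ℕ) (y : ℕ → ℝ)
    (hsep : ∀ j j' : ℕ, j < j' → y j + c * t < y j' - c * t)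
    (hub : ∀ j, j < J → y j + c * t ≤ x)
    (h : ∀ j, j < J → ∃ n : ℕ, y j - c * t ≤ (n : ℝ) ∧ (n : ℝ) ≤ y j + c * t ∧ p n) :
    (J : ℝ) ≤ ((Finset.range (⌊x⌋₊ + 1)).filter p).card := by
  choose f h1 h2 h3 using h
  have key : J ≤ ((Finset.range (⌊x⌋₊ + 1)).filter p).card := by
    rw [← Finset.card_range J]
    apply Finset.card_le_card_of_injOn (fun j => if hj : j < J then f j hj else 0)
    · intro j hjmem
      have hj : j < J := Finset.mem_range.mp hjmem
      simp only [dif_pos hj]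
      rw [Finset.mem_coe, Finset.mem_filter, Finset.mem_range]
      refine ⟨?_, h3 j hj⟩
      have hle : (f j hj : ℝ) ≤ x := le_trans (h2 j hj) (hub j hj)
      have := Nat.le_floor hle
      omega
    · intro j hjmem j' hjmem' hff
      have hj : j < J := Finset.mem_range.mp (by simpa using hjmem)
      have hj' : j' < J := Finset.mem_range.mp (by simpa using hjmem')
      simp only [dif_pos hj, dif_pos hj'] at hff
      by_contra hne
      have hmono : ∀ (i i' : ℕ) (hi : i < J) (hi' : i' < J), i < i' →
          (f i hi : ℝ) < f i' hi' := by
        intro i i' hi hi' hlt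
        calc (f i hi : ℝ) ≤ y i + c * t := h2 i hi
          _ < y i' - c * t := hsep i i' hlt
          _ ≤ f i' hi' := h1 i' hi'
      rcases Nat.lt_or_ge j j' with h' | h'
      · exact absurd hff (by exact_mod_cast (hmono j j' hj hj' h').ne)
      · have hlt : j' < j := lt_of_le_of_ne h' (Ne.symm hne)
        exact absurd hff.symm (by exact_mod_cast (hmono j' j hj' hj hlt).ne)
  exact_mod_cast key

set_option maxHeartbeats 2000000 in
theorem stmt18 (m : ℕ) (hm : 2 ≤ m) (a : ℕ → ℝ) (c : ℝ) (hc : 0 < c) (X₀ : ℝ)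
    (hosc : ∀ x : ℝ, X₀ ≤ x →
      ∃ n n' : ℕ,
        (n : ℝ) ∈ Set.Icc (x - c * x ^ (1 - 1 / (m:ℝ))) (x + c * x ^ (1 - 1 / (m:ℝ))) ∧
        (n' : ℝ) ∈ Set.Icc (x - c * x ^ (1 - 1 / (m:ℝ))) (x + c * x ^ (1 - 1 / (m:ℝ))) ∧
        0 < a n ∧ a n' < 0) :
    ∃ c' : ℝ, 0 < c' ∧ ∃ X₁ : ℝ, ∀ x : ℝ, X₁ ≤ x →
      c' * x ^ (1 / (m:ℝ)) ≤
        ((Finset.range (⌊x⌋₊ + 1)).filter (fun n => 0 < a n)).card ∧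
      c' * x ^ (1 / (m:ℝ)) ≤
        ((Finset.range (⌊x⌋₊ + 1)).filter (fun n => a n < 0)).card := by
  have hm0 : (m : ℝ) ≠ 0 := by
    have : 0 < m := by omega
    exact_mod_cast this.ne'
  have hm2 : (2:ℝ) ≤ (m:ℝ) := by exact_mod_cast hm
  have hinvm : 0 < 1/(m:ℝ) := by positivity
  have he0 : 0 ≤ 1 - 1/(m:ℝ) := by
    have : 1/(m:ℝ) ≤ 1 := by
      rw [div_le_one (by linarith)]; linarith
    linarith
  refine ⟨1/(8*(2*c+1)), by positivity, max (max (2*X₀) 1) ((8*(2*c+1))^m), ?_⟩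
  intro x hx
  have hx1 : (1:ℝ) ≤ x := le_trans (le_trans (le_max_right _ _) (le_max_left _ _)) hx
  have hx0 : (0:ℝ) < x := lt_of_lt_of_le one_pos hx1
  have hxX₀ : 2*X₀ ≤ x := le_trans (le_trans (le_max_left _ _) (le_max_left _ _)) hx
  have hxA : ((8*(2*c+1))^m : ℝ) ≤ x := le_trans (le_max_right _ _) hx
  set t := x ^ (1 - 1/(m:ℝ)) with htdef
  have ht : 0 < t := Real.rpow_pos_of_pos hx0 _
  have hxt : x ^ (1/(m:ℝ)) * t = x := by
    rw [htdef, ← Real.rpow_add hx0]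
    have : 1/(m:ℝ) + (1 - 1/(m:ℝ)) = 1 := by ring
    rw [this, Real.rpow_one]
  have hs0 : 0 < x ^ (1/(m:ℝ)) := Real.rpow_pos_of_pos hx0 _
  have hA : 8*(2*c+1) ≤ x ^ (1/(m:ℝ)) := by
    have h1 : ((8*(2*c+1))^m : ℝ) ^ (1/(m:ℝ)) ≤ x ^ (1/(m:ℝ)) :=
      Real.rpow_le_rpow (by positivity) hxA hinvm.le
    calc 8*(2*c+1) = ((8*(2*c+1))^m : ℝ) ^ (1/(m:ℝ)) := by
          rw [← Real.rpow_natCast (8*(2*c+1)) m, ← Real.rpow_mul (by positivity),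
            mul_one_div, div_self hm0, Real.rpow_one]
      _ ≤ _ := h1
  set D := (2*c+1)*t with hDdef
  have hD : 0 < D := mul_pos (by linarith) ht
  set J := ⌊x/(4*D)⌋₊ with hJdef
  have hJub : (J:ℝ) ≤ x/(4*D) := Nat.floor_le (div_nonneg hx0.le (by linarith))
  have hJlb : x/(4*D) < (J:ℝ) + 1 := Nat.lt_floor_add_one _
  clear_value J D t
  have hxD : x/(4*D) = x ^ (1/(m:ℝ))/(4*(2*c+1)) := by
    rw [hDdef, div_eq_div_iff (by nlinarith) (by linarith)]
    linear_combination (-4*(2*c+1)) * hxt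
  have hJD : (J:ℝ)*D ≤ x/4 := by
    have h1 := mul_le_mul_of_nonneg_right hJub hD.le
    have h2 : x/(4*D)*D = x/4 := by
      field_simp
    linarith [h1, h2.le]
  -- lower bound on J
  have hcx : 1/(8*(2*c+1)) * x ^ (1/(m:ℝ)) ≤ (J:ℝ) := by
    have h1 : x ^ (1/(m:ℝ))/(4*(2*c+1)) < (J:ℝ) + 1 := by rw [← hxD]; exact hJlb
    have h2 : x ^ (1/(m:ℝ)) < ((J:ℝ)+1) * (4*(2*c+1)) := by
      rw [div_lt_iff₀ (by linarith)] at h1; exact h1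
    rw [one_div, inv_mul_le_iff₀ (by linarith)]
    nlinarith [hA, (Nat.cast_nonneg J : (0:ℝ) ≤ J)]
  set y : ℕ → ℝ := fun j => x/2 + j*D with hydef
  clear_value y
  have hjD : ∀ j : ℕ, 0 ≤ (j:ℝ)*D := fun j => mul_nonneg (Nat.cast_nonneg j) hD.le
  have hX₀y : ∀ j, X₀ ≤ y j := by
    intro j
    have := hjD j
    simp only [hydef]
    linarith
  have hjJD : ∀ j, j < J → (j:ℝ)*D + D ≤ x/4 := by
    intro j hj
    have hjJ : (j:ℝ)+1 ≤ (J:ℝ) := by exact_mod_cast hj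
    nlinarith [hD, hJD]
  have hct : c*t ≤ D := by rw [hDdef]; nlinarith [ht]
  have hyub : ∀ j, j < J → y j + c*t ≤ x := by
    intro j hj
    have := hjJD j hj
    simp only [hydef]
    linarith [hct, hx0]
  have hyx : ∀ j, j < J → y j ≤ x := by
    intro j hj
    have := hyub j hj
    nlinarith [mul_pos hc ht]
  have hy0 : ∀ j, 0 ≤ y j := by
    intro j
    have := hjD j
    simp only [hydef]
    linarith
  have hsep : ∀ j j' : ℕ, j < j' → y j + c*t < y j' - c*t := by
    intro j j' hlt
    have h1 : (j:ℝ)+1 ≤ (j':ℝ) := by exact_mod_cast hlt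
    have h2 : (j:ℝ)*D + D ≤ (j':ℝ)*D := by nlinarith [hD]
    simp only [hydef]
    rw [hDdef] at h2
    nlinarith [ht]
  have hex : ∀ j, j < J →
      (∃ n : ℕ, y j - c*t ≤ (n:ℝ) ∧ (n:ℝ) ≤ y j + c*t ∧ 0 < a n) ∧
      (∃ n' : ℕ, y j - c*t ≤ (n':ℝ) ∧ (n':ℝ) ≤ y j + c*t ∧ a n' < 0) := by
    intro j hj
    have hyt : (y j) ^ (1 - 1/(m:ℝ)) ≤ t := by
      rw [htdef]; exact Real.rpow_le_rpow (hy0 j) (hyx j hj) he0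
    have hcyt : c * (y j) ^ (1 - 1/(m:ℝ)) ≤ c * t :=
      mul_le_mul_of_nonneg_left hyt hc.le
    obtain ⟨n, n', hn, hn', hpos, hneg⟩ := hosc (y j) (hX₀y j)
    refine ⟨⟨n, ?_, ?_, hpos⟩, ⟨n', ?_, ?_, hneg⟩⟩
    · linarith [hn.1]
    · linarith [hn.2]
    · linarith [hn'.1]
    · linarith [hn'.2]
  constructor
  · exact le_trans hcx (count_aux (fun n => 0 < a n) x t c J y hsep hyub
      (fun j hj => (hex j hj).1))
  · exact le_trans hcx (count_aux (fun n => a n < 0) x t c J y hsep hyub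
      (fun j hj => (hex j hj).2))
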